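/- Let G be a finite group and p a prime. If p does not divide the size of any conjugacy class of G, then G has a Sylow p-subgroup contained in the center of G. -/

import Mathlib

open Subgroup
open scoped Pointwise

/-- Conjugation action of a subgroup on a conjugacy class. -/
def conjClassAction {G : Type} [Group G] (P : Subgroup G) (x : G) :
    MulAction P {b : G // IsConj x b} where
  smul g b := ⟨(g : G) * b * (g : G)⁻¹, b.2.trans (isConj_iff.2 ⟨g, rfl⟩)⟩
  one_smul b := by ext; simp [HSMul.hSMul]
  mul_smul g g' b := by
    ext
    simp only [HSMul.hSMul, Subgroup.coe_mul, mul_inv_rev]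
    group

/-- If every element of a finite group is conjugate into a subgroup `C`, then `C = ⊤`. -/
theorem cover_lemma (G : Type) [Group G] [Finite G] (C : Subgroup G)
    (h : ∀ x : G, ∃ g : G, g * x * g⁻¹ ∈ C) : C = ⊤ := by
  classical
  set N := Subgroup.normalizer (C : Set G) with hN
  haveI : Fintype (G ⧸ N) := Fintype.ofFinite _
  set H : G ⧸ N → Subgroup G := fun q => C.map (MulAut.conj (Quotient.out q)).toMonoidHom
    with hH
  -- conjugation by an element of the normalizer fixes C
  have key : ∀ n ∈ N, C.map (MulAut.conj n).toMonoidHom = C := by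
    intro n hn
    ext x
    simp only [Subgroup.mem_map, MulEquiv.coe_toMonoidHom, MulAut.conj_apply]
    constructor
    · rintro ⟨c, hc, rfl⟩
      exact (Subgroup.mem_normalizer_iff.1 hn c).1 hc
    · intro hx
      exact ⟨n⁻¹ * x * n, by
        have := (Subgroup.mem_normalizer_iff''.1 hn x).1 hx
        simpa [mul_assoc] using this, by group⟩
  have hmk : ∀ g : G, H (QuotientGroup.mk g) = C.map (MulAut.conj g).toMonoidHom := by
    intro g
    have hout : QuotientGroup.mk (Quotient.out (QuotientGroup.mk g : G ⧸ N)) =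
        (QuotientGroup.mk g : G ⧸ N) := Quotient.out_eq _
    rw [QuotientGroup.eq] at hout
    -- g⁻¹ * out ∈ N
    set n : G := g⁻¹ * Quotient.out (QuotientGroup.mk g : G ⧸ N) with hn2
    have hnN : n ∈ N := by
      rw [← Subgroup.inv_mem_iff]
      simpa [hn2, mul_assoc] using hout
    have hout2 : Quotient.out (QuotientGroup.mk g : G ⧸ N) = g * n := by
      rw [hn2]; group
    rw [hH]
    simp only [hout2]
    have : MulAut.conj (g * n) = MulAut.conj g * MulAut.conj n := by
      simp [map_mul]
    rw [this]
    have comp : ((MulAut.conj g * MulAut.conj n : MulAut G)).toMonoidHom =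
        (MulAut.conj g).toMonoidHom.comp (MulAut.conj n).toMonoidHom := rfl
    rw [comp, ← Subgroup.map_map, key n hnN]
  have hcovers : ⋃ q ∈ (Finset.univ : Finset (G ⧸ N)), (1 : G) • (H q : Set G) = Set.univ := by
    ext x
    simp only [Set.mem_iUnion, Set.mem_univ, iff_true, one_smul, Finset.mem_univ, exists_true_left]
    obtain ⟨g, hg⟩ := h x
    refine ⟨QuotientGroup.mk g⁻¹, ?_⟩
    rw [hmk g⁻¹]
    exact ⟨g * x * g⁻¹, hg, by simp [MulAut.conj_apply]; group⟩
  have hindex : ∀ q : G ⧸ N, (H q).index = C.index := fun q =>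
    Subgroup.index_map_eq C (MulEquiv.surjective _)
      (by
        intro a ha
        have : (MulAut.conj (Quotient.out q)) a = 1 := ha
        have : a = 1 := by
          have h2 := congrArg (⇑(MulAut.conj (Quotient.out q)).symm) this
          rw [← (MulAut.conj (Quotient.out q)).symm_apply_apply a]
          simpa using h2
        simp [this, Subgroup.one_mem])
  have hsum := Subgroup.one_le_sum_inv_index_of_leftCoset_cover hcovers
  have hCpos : C.index ≠ 0 := Subgroup.index_ne_zero_of_finite
  have hNpos : N.index ≠ 0 := Subgroup.index_ne_zero_of_finite
  have hcard : (Fintype.card (G ⧸ N) : ℚ) = (N.index : ℚ) := by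
    rw [Subgroup.index_eq_card, Nat.card_eq_fintype_card]
  have hsum' : (1 : ℚ) ≤ (N.index : ℚ) * ((C.index : ℚ))⁻¹ := by
    calc (1:ℚ) ≤ ∑ q : G ⧸ N, ((H q).index : ℚ)⁻¹ := hsum
    _ = (Fintype.card (G ⧸ N) : ℚ) * ((C.index : ℚ))⁻¹ := by
        simp [hindex, Finset.sum_const, nsmul_eq_mul]
    _ = (N.index : ℚ) * ((C.index : ℚ))⁻¹ := by rw [hcard]
  have hle : C.index ≤ N.index := by
    have := (le_div_iff₀ (c := (C.index : ℚ)) (by positivity)).1 (by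
      simpa [div_eq_mul_inv] using hsum')
    exact_mod_cast by simpa using this
  have hdvd : N.index ∣ C.index := Subgroup.index_dvd_of_le Subgroup.le_normalizer
  have heq : N.index = C.index := le_antisymm (Nat.le_of_dvd (Nat.pos_of_ne_zero hCpos) hdvd) hle
  -- sum equals one
  have hsum1 : ∑ q ∈ (Finset.univ : Finset (G ⧸ N)), ((H q).index : ℚ)⁻¹ = 1 := by
    have : ∑ q : G ⧸ N, ((H q).index : ℚ)⁻¹ = (N.index : ℚ) * ((C.index : ℚ))⁻¹ := by
      simp [hindex, Finset.sum_const, nsmul_eq_mul, ← hcard]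
    rw [this, heq, mul_inv_cancel₀ (by exact_mod_cast hCpos)]
  have hdisj := Subgroup.pairwiseDisjoint_leftCoset_cover_of_sum_inv_index_eq_one hcovers hsum1
  -- now show the quotient is a subsingleton
  by_contra hC
  have hCne : C.index ≠ 1 := fun h1 => hC (Subgroup.index_eq_one.1 h1)
  have h2 : 1 < Fintype.card (G ⧸ N) := by
    have : N.index ≠ 1 := heq ▸ hCne
    have : 1 < N.index := lt_of_le_of_ne (Nat.one_le_iff_ne_zero.2 hNpos) (Ne.symm this)
    rwa [Subgroup.index_eq_card, Nat.card_eq_fintype_card] at this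
  rw [Fintype.one_lt_card_iff_nontrivial] at h2
  obtain ⟨q, q', hqq'⟩ := exists_pair_ne (G ⧸ N)
  haveI : ∀ q : G ⧸ N, (H q).FiniteIndex := fun q => ⟨by rw [hindex]; exact hCpos⟩
  have hq : q ∈ Finset.univ.filter (fun i => (H i).FiniteIndex) := by
    simp [Finset.mem_filter]; infer_instance
  have hq' : q' ∈ Finset.univ.filter (fun i => (H i).FiniteIndex) := by
    simp [Finset.mem_filter]; infer_instance
  have := hdisj hq hq' hqq'
  have h1q : (1 : G) ∈ (1 : G) • (H q : Set G) := by simp [Subgroup.one_mem]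
  have h1q' : (1 : G) ∈ (1 : G) • (H q' : Set G) := by simp [Subgroup.one_mem]
  exact Set.disjoint_left.1 (this) h1q h1q'

theorem stmt2 (G : Type) [Group G] [Finite G] (p : ℕ) (hp : p.Prime)
    (h : ∀ a : G, ¬ p ∣ Nat.card {b : G // IsConj a b}) :
    ∃ P : Sylow p G, (P : Subgroup G) ≤ Subgroup.center G := by
  haveI : Fact p.Prime := ⟨hp⟩
  obtain ⟨P⟩ : Nonempty (Sylow p G) := inferInstance
  refine ⟨P, ?_⟩
  -- every element is conjugate into the centralizer of P
  have hcent : ∀ x : G, ∃ g : G, g * x * g⁻¹ ∈ Subgroup.centralizer (P : Set G) := by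
    intro x
    letI := conjClassAction (P : Subgroup G) x
    have hP : IsPGroup p (P : Subgroup G) := P.2
    obtain ⟨b, hb⟩ := hP.nonempty_fixed_point_of_prime_not_dvd_card
      {b : G // IsConj x b} (h x)
    obtain ⟨c, hc⟩ := isConj_iff.1 b.2
    refine ⟨c, ?_⟩
    rw [hc]
    rw [Subgroup.mem_centralizer_iff]
    intro g hg
    have hfix := MulAction.mem_fixedPoints.1 hb (⟨g, hg⟩ : (P : Subgroup G))
    have heq : (g : G) * (b : G) * g⁻¹ = (b : G) := congrArg Subtype.val hfix
    calc g * (b:G) = (g * b * g⁻¹) * g := by group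
    _ = (b:G) * g := by rw [heq]
  have htop := cover_lemma G (Subgroup.centralizer (P : Set G)) hcent
  intro x hx
  rw [Subgroup.mem_center_iff]
  intro g
  have hg : g ∈ Subgroup.centralizer (P : Set G) := htop ▸ Subgroup.mem_top g
  exact (hg x hx).symm
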